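/- Let X be a simplicial set, G a simplicial group, and τ : X_{>0} → G a twisting function. Let n = k + l with 1 ≤ k ≤ n, and write i ∈ S_{n−1} as i = (i_1, i_2) where i_1 consists of the first l entries and i_2 of the last k−1 entries, so that i_1 ∈ S_{n−1}(p) for p = (0 = p_0 < p_1 < ⋯ < p_k = n) the set left by the removal procedure of i_1 on {0,…,n}, and i_2 ∈ S_{k−1}. Then for every x ∈ X_n, (∂_0)^l Sz_i x = Sz_{i_2} x(p_0, p_1, …, p_k) in G_{k−1}. -/

import Mathlib

open CategoryTheory

/-- `memS n l i` means `i ∈ S_{n,l}`: a sequence of length `l` with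
`0 ≤ i_s ≤ n - s` for `1 ≤ s ≤ l` (here `i.getD t 0` is the entry `i_{t+1}`). -/
def memS (n l : ℕ) (i : List ℕ) : Prop :=
  i.length = l ∧ ∀ t < l, i.getD t 0 + t + 1 ≤ n

/-- The ordered set remaining from `{0, …, n}` after performing the first `r`
removal steps prescribed by `i`: at each step the element at (0-indexed)
position `i_r + 1` of the remaining set is removed. -/
def restAfter (n : ℕ) (i : List ℕ) (r : ℕ) : List ℕ :=
  (i.take r).foldl (fun L a => L.eraseIdx (a + 1)) (List.range (n + 1))

/-- The ordered set remaining from `{0, …, n}` after the whole removal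
procedure prescribed by `i`. -/
def restList (n : ℕ) (i : List ℕ) : List ℕ := restAfter n i i.length

/-- The element `e_{r+1}` removed at (0-indexed) step `r` of the removal
procedure on `{0, …, n}` prescribed by `i`. -/
def elemRemoved (n : ℕ) (i : List ℕ) (r : ℕ) : ℕ :=
  (restAfter n i r).getD (i.getD r 0 + 1) 0

/-- The component `α_s` of `Ψ_p(i)`, for the interval `(a, b) = (p_{s-1}, p_s)`:
the set of (0-indexed) steps at which an element strictly between `a` and `b`
is removed. -/
def psiAlpha (n : ℕ) (i : List ℕ) (a b : ℕ) : Finset ℕ :=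
  (Finset.range i.length).filter
    (fun r => a < elemRemoved n i r ∧ elemRemoved n i r < b)

/-- The component `j_s` of `Ψ_p(i)`, for the interval `(a, b) = (p_{s-1}, p_s)`:
its `u`-th entry is `w - 1` where the `u`-th element of `(a, b)` to be removed
is, at the moment of its removal, the `w`-th smallest element of `(a, b)` still
present. -/
def psiJ (n : ℕ) (i : List ℕ) (a b : ℕ) : List ℕ :=
  ((List.range i.length).filter
      (fun r => decide (a < elemRemoved n i r ∧ elemRemoved n i r < b))).map
    (fun r => ((restAfter n i r).filter
      (fun y => decide (a < y ∧ y < elemRemoved n i r))).length)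

/-- `α` is a `(q_0, …, q_{k-1})`-shuffle: an ordered partition of
`{0, …, q_0 + ⋯ + q_{k-1} - 1}` with `|α_s| = q_s`. -/
def IsShuffleF {k : ℕ} (q : Fin k → ℕ) (α : Fin k → Finset ℕ) : Prop :=
  (∀ s, (α s).card = q s) ∧ (∀ s t, s ≠ t → Disjoint (α s) (α t)) ∧
    Finset.univ.biUnion α = Finset.range (∑ s, q s)

/-- The sign exponent `(α)` of a shuffle: the number of pairs `(a, b)` with
`a ∈ α_s`, `b ∈ α_t`, `s < t` and `a > b`. -/
def shuffleExpN (k : ℕ) (α : ℕ → Finset ℕ) : ℕ :=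
  ∑ s ∈ Finset.range k, ∑ t ∈ Finset.range k,
    if s < t then ∑ a ∈ α s, ((α t).filter (fun b => b < a)).card else 0

/-- Vertex map of the derived operator. -/
def derivedFun (f : ℕ → ℕ) : ℕ → ℕ := fun t => if t = 0 then 0 else f (t - 1) + 1

/-- Vertex map of the face map `δ_j`. -/
def deltaFun (j : ℕ) : ℕ → ℕ := fun t => if t < j then t else t + 1

/-- Vertex map of the degeneracy map `σ_j`. -/
def sigmaFun (j : ℕ) : ℕ → ℕ := fun t => if t ≤ j then t else t - 1

/-- Vertex map of the Szczarba operator `D_i^k`. -/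
def DFun : List ℕ → ℕ → ℕ → ℕ
  | [], _ => id
  | (i1 :: i'), k =>
    if k < i1 then deltaFun (i1 - k) ∘ sigmaFun 0 ∘ derivedFun (DFun i' k)
    else if k = i1 then derivedFun (DFun i' k)
    else sigmaFun 0 ∘ derivedFun (DFun i' (k - 1))

section

open Simplicial

/-- The morphism `[b] ⟶ [a]` in the simplex category whose vertex map is (the
monotone clamped version of) `f`.  When `f` is monotone and maps `[b]` into `[a]`
this is exactly the morphism with vertex map `f`. -/
def mkHomF (a b : ℕ) (f : ℕ → ℕ) : (SimplexCategory.mk b ⟶ SimplexCategory.mk a) :=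
  SimplexCategory.mkHom
    { toFun := fun t => ⟨min ((Finset.range (t.1 + 1)).sup f) a,
        Nat.lt_succ_of_le (min_le_right _ _)⟩
      monotone' := fun u v huv => by
        simp only [Fin.mk_le_mk]
        exact min_le_min
          (Finset.sup_mono (Finset.range_subset_range.mpr (Nat.succ_le_succ huv))) le_rfl }

/-- The natural simplicial operator `X_a → X_b` with vertex map `f : [b] → [a]`. -/
def simpOp (X : SSet) (f : ℕ → ℕ) (a b : ℕ) (x : X _⦋a⦌) : X _⦋b⦌ :=
  X.map (mkHomF a b f).op x

/-- The natural simplicial operator `G_a → G_b` with vertex map `f : [b] → [a]`,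
for a simplicial group `G`. -/
def grpOp (G : CategoryTheory.SimplicialObject GrpCat) (f : ℕ → ℕ) (a b : ℕ)
    (g : G _⦋a⦌) : G _⦋b⦌ :=
  (G.map (mkHomF a b f).op) g

/-- A twisting function `τ : X_{>0} → G`. -/
structure TwistingFn (X : SSet) (G : CategoryTheory.SimplicialObject GrpCat) where
  map : ∀ n : ℕ, X _⦋n + 1⦌ → G _⦋n⦌
  d0 : ∀ (n : ℕ) (x : X _⦋n + 2⦌),
    grpOp G (deltaFun 0) (n + 1) n (map (n + 1) x)
      = (map n (simpOp X (deltaFun 0) (n + 2) (n + 1) x))⁻¹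
        * map n (simpOp X (deltaFun 1) (n + 2) (n + 1) x)
  dk : ∀ (n k : ℕ) (x : X _⦋n + 2⦌), 0 < k → k < n + 2 →
    grpOp G (deltaFun k) (n + 1) n (map (n + 1) x)
      = map n (simpOp X (deltaFun (k + 1)) (n + 2) (n + 1) x)
  sk : ∀ (n k : ℕ) (x : X _⦋n + 1⦌), k < n + 1 →
    grpOp G (sigmaFun k) n (n + 1) (map n x)
      = map (n + 1) (simpOp X (sigmaFun (k + 1)) (n + 1) (n + 2) x)
  s0 : ∀ (n : ℕ) (x : X _⦋n⦌), map n (simpOp X (sigmaFun 0) n (n + 1) x) = 1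

/-- Szczarba's operator `Sz_i : X_{n+1} → G_n`. -/
def Sz {X : SSet} {G : CategoryTheory.SimplicialObject GrpCat} (τ : TwistingFn X G)
    (n : ℕ) (i : List ℕ) (x : X _⦋n + 1⦌) : G _⦋n⦌ :=
  ((List.range (n + 1)).map (fun r =>
    grpOp G (DFun i r) (n - r) n
      ((τ.map (n - r) (simpOp X (fun t => t + r) (n + 1) ((n - r) + 1) x))⁻¹))).prod

/-- The group component of the operator `hatSz_i : X_n → X_n × G_n`. -/
def hatSzG {X : SSet} {G : CategoryTheory.SimplicialObject GrpCat} (τ : TwistingFn X G)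
    (n : ℕ) (i : List ℕ) (x : X _⦋n⦌) : G _⦋n⦌ :=
  ((List.range n).map (fun r =>
    grpOp G (DFun i (r + 1)) (n - (r + 1)) n
      ((τ.map (n - (r + 1)) (simpOp X (fun t => t + r) n ((n - (r + 1)) + 1) x))⁻¹))).prod

/-- Szczarba's operator `hatSz_i : X_n → (X ×_τ G)_n = X_n × G_n`. -/
def hatSz {X : SSet} {G : CategoryTheory.SimplicialObject GrpCat} (τ : TwistingFn X G)
    (n : ℕ) (i : List ℕ) (x : X _⦋n⦌) : X _⦋n⦌ × G _⦋n⦌ :=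
  (simpOp X (DFun i 0) n n x, hatSzG τ n i x)

end

/-- The `r`-fold iterate of the zeroth face map of the twisted Cartesian
product `X ×_τ G`. -/
def twD0pow {X : SSet} {G : CategoryTheory.SimplicialObject GrpCat} (τ : TwistingFn X G) :
    (r : ℕ) → (m : ℕ) → (X : CategoryTheory.SimplicialObject _).obj (Opposite.op (SimplexCategory.mk (m + r))) × ((G : CategoryTheory.SimplicialObject _).obj (Opposite.op (SimplexCategory.mk (m + r))) : Type _) → (X : CategoryTheory.SimplicialObject _).obj (Opposite.op (SimplexCategory.mk (m))) × ((G : CategoryTheory.SimplicialObject _).obj (Opposite.op (SimplexCategory.mk (m))) : Type _)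
  | 0, _, z => z
  | r + 1, m, z =>
      twD0pow τ r m
        (simpOp X (deltaFun 0) (m + r + 1) (m + r) z.1,
         τ.map (m + r) z.1 * grpOp G (deltaFun 0) (m + r + 1) (m + r) z.2)

/-- Vertex map of the iterated degeneracy `s_B` on a finite set `B`. -/
def degenFun (B : Finset ℕ) : ℕ → ℕ := fun t => t - (B.filter (fun b => b < t)).card

/-- The map `Φ : S_n × [n] → S_{n-1} × [n-1]`. -/
def Phi : List ℕ → ℕ → List ℕ × ℕ
  | [], _ => ([], 0)
  | (i1 :: i'), p =>
    if p < i1 then ((i1 - 1) :: (Phi i' p).1, (Phi i' p).2 + 1)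
    else if p = i1 ∨ p = i1 + 1 then (i', 0)
    else (i1 :: (Phi i' (p - 1)).1, (Phi i' (p - 1)).2 + 1)

open Simplicial


/-! ### Auxiliary lemmas -/

lemma mkHomF_apply (a b : ℕ) (f : ℕ → ℕ)
    (hm : ∀ u v, u ≤ v → v ≤ b → f u ≤ f v) (hb : ∀ t, t ≤ b → f t ≤ a)
    (t : Fin (b + 1)) : ((mkHomF a b f).toOrderHom t : ℕ) = f t := by
  have ht : (t : ℕ) ≤ b := Nat.lt_succ_iff.mp t.isLt
  have hsup : (Finset.range (t.1 + 1)).sup f = f t := by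
    apply le_antisymm
    · exact Finset.sup_le fun u hu =>
        hm u t (Nat.lt_succ_iff.mp (Finset.mem_range.mp hu)) ht
    · exact Finset.le_sup (Finset.mem_range.mpr (Nat.lt_succ_self _))
  show min ((Finset.range (t.1 + 1)).sup f) a = f t
  rw [hsup]
  exact min_eq_left (hb t ht)

lemma mkHomF_congr (a b : ℕ) (f f' : ℕ → ℕ) (h : ∀ t, t ≤ b → f t = f' t) :
    mkHomF a b f = mkHomF a b f' := by
  apply SimplexCategory.Hom.ext; ext t
  show min ((Finset.range (t.1 + 1)).sup f) a = min ((Finset.range (t.1 + 1)).sup f') a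
  have ht : (t : ℕ) ≤ b := Nat.lt_succ_iff.mp t.isLt
  congr 1
  exact Finset.sup_congr rfl fun u hu =>
    h u (le_trans (Nat.lt_succ_iff.mp (Finset.mem_range.mp hu)) ht)

lemma mkHomF_id (a : ℕ) (f : ℕ → ℕ) (h : ∀ t, t ≤ a → f t = t) :
    mkHomF a a f = 𝟙 _ := by
  apply SimplexCategory.Hom.ext; ext t
  have := mkHomF_apply a a f (fun u v huv hv => by rw [h u (le_trans huv hv), h v hv]; exact huv)
    (fun t ht => (h t ht).le.trans ht) t
  rw [h t (Nat.lt_succ_iff.mp t.isLt)] at this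
  simpa using this

lemma mkHomF_comp (a b c : ℕ) (f g : ℕ → ℕ)
    (hfm : ∀ u v, u ≤ v → v ≤ b → f u ≤ f v) (hfb : ∀ t, t ≤ b → f t ≤ a)
    (hgm : ∀ u v, u ≤ v → v ≤ c → g u ≤ g v) (hgb : ∀ t, t ≤ c → g t ≤ b) :
    mkHomF b c g ≫ mkHomF a b f = mkHomF a c (fun t => f (g t)) := by
  apply SimplexCategory.Hom.ext; ext t
  have h1 : (mkHomF b c g).toOrderHom t = ⟨g t, Nat.lt_succ_of_le (hgb t (Nat.lt_succ_iff.mp t.isLt))⟩ :=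
    Fin.ext (mkHomF_apply b c g hgm hgb t)
  have hcomp : ((mkHomF b c g ≫ mkHomF a b f).toOrderHom t : ℕ)
      = ((mkHomF a b f).toOrderHom ((mkHomF b c g).toOrderHom t) : ℕ) := rfl
  rw [hcomp, h1, mkHomF_apply a b f hfm hfb]
  rw [mkHomF_apply a c _ (fun u v huv hv => hfm _ _ (hgm u v huv hv) (hgb v hv))
    (fun u hu => hfb _ (hgb u hu)) t]

lemma simpOp_congr (X : SSet) (a b : ℕ) (f f' : ℕ → ℕ) (h : ∀ t, t ≤ b → f t = f' t)
    (x : X _⦋a⦌) : simpOp X f a b x = simpOp X f' a b x := by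
  unfold simpOp; rw [mkHomF_congr a b f f' h]

lemma grpOp_congr (G : CategoryTheory.SimplicialObject GrpCat) (a b : ℕ) (f f' : ℕ → ℕ)
    (h : ∀ t, t ≤ b → f t = f' t) (x : G _⦋a⦌) : grpOp G f a b x = grpOp G f' a b x := by
  unfold grpOp; rw [mkHomF_congr a b f f' h]

lemma simpOp_id (X : SSet) (a : ℕ) (f : ℕ → ℕ) (h : ∀ t, t ≤ a → f t = t) (x : X _⦋a⦌) :
    simpOp X f a a x = x := by
  unfold simpOp; rw [mkHomF_id a f h]
  simp

lemma grpOp_id (G : CategoryTheory.SimplicialObject GrpCat) (a : ℕ) (f : ℕ → ℕ)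
    (h : ∀ t, t ≤ a → f t = t) (x : G _⦋a⦌) : grpOp G f a a x = x := by
  unfold grpOp; rw [mkHomF_id a f h]
  simp

lemma simpOp_comp (X : SSet) (a b c : ℕ) (f g : ℕ → ℕ)
    (hfm : ∀ u v, u ≤ v → v ≤ b → f u ≤ f v) (hfb : ∀ t, t ≤ b → f t ≤ a)
    (hgm : ∀ u v, u ≤ v → v ≤ c → g u ≤ g v) (hgb : ∀ t, t ≤ c → g t ≤ b)
    (x : X _⦋a⦌) :
    simpOp X g b c (simpOp X f a b x) = simpOp X (fun t => f (g t)) a c x := by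
  unfold simpOp
  rw [← mkHomF_comp a b c f g hfm hfb hgm hgb, op_comp, FunctorToTypes.map_comp_apply]

lemma grpOp_comp (G : CategoryTheory.SimplicialObject GrpCat) (a b c : ℕ) (f g : ℕ → ℕ)
    (hfm : ∀ u v, u ≤ v → v ≤ b → f u ≤ f v) (hfb : ∀ t, t ≤ b → f t ≤ a)
    (hgm : ∀ u v, u ≤ v → v ≤ c → g u ≤ g v) (hgb : ∀ t, t ≤ c → g t ≤ b)
    (x : G _⦋a⦌) :
    grpOp G g b c (grpOp G f a b x) = grpOp G (fun t => f (g t)) a c x := by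
  unfold grpOp
  rw [← mkHomF_comp a b c f g hfm hfb hgm hgb, op_comp, G.map_comp]
  rfl

lemma grpOp_inv (G : CategoryTheory.SimplicialObject GrpCat) (a b : ℕ) (f : ℕ → ℕ)
    (x : G _⦋a⦌) : grpOp G f a b x⁻¹ = (grpOp G f a b x)⁻¹ :=
  map_inv _ _

lemma grpOp_mul (G : CategoryTheory.SimplicialObject GrpCat) (a b : ℕ) (f : ℕ → ℕ)
    (x y : G _⦋a⦌) : grpOp G f a b (x * y) = grpOp G f a b x * grpOp G f a b y :=
  map_mul _ _ _

lemma grpOp_prod (G : CategoryTheory.SimplicialObject GrpCat) (a b : ℕ) (f : ℕ → ℕ)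
    (L : List (G _⦋a⦌)) : grpOp G f a b L.prod = (L.map (grpOp G f a b)).prod :=
  map_list_prod _ _

lemma deltaFun_mono (j : ℕ) : Monotone (deltaFun j) := by
  intro u v h; unfold deltaFun; split <;> split <;> omega

lemma sigmaFun_mono (j : ℕ) : Monotone (sigmaFun j) := by
  intro u v h; unfold sigmaFun; split <;> split <;> omega

lemma derivedFun_mono {f : ℕ → ℕ} (hf : Monotone f) : Monotone (derivedFun f) := by
  intro u v h; unfold derivedFun
  split <;> split <;> first
    | omega
    | (rename_i h1 h2; exact Nat.succ_le_succ (hf (by omega)))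
    | (rename_i h1 h2; exact le_trans (Nat.zero_le _) (Nat.zero_le _).trans (Nat.zero_le _))

lemma DFun_mono : ∀ (i : List ℕ) (k : ℕ), Monotone (DFun i k) := by
  intro i
  induction i with
  | nil => intro k; exact monotone_id
  | cons i1 i' ih =>
    intro k
    show Monotone (DFun (i1 :: i') k)
    unfold DFun
    split_ifs
    · exact ((deltaFun_mono _).comp (sigmaFun_mono 0)).comp (derivedFun_mono (ih k))
    · exact derivedFun_mono (ih k)
    · exact (sigmaFun_mono 0).comp (derivedFun_mono (ih (k-1)))

lemma DFun_cons_zero (i1 : ℕ) (i' : List ℕ) (k : ℕ) : DFun (i1 :: i') k 0 = 0 := by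
  unfold DFun derivedFun sigmaFun deltaFun
  split_ifs <;> simp_all <;> omega

lemma DFun_cons_lt {i1 k : ℕ} (i' : List ℕ) (h : k < i1) (t : ℕ) :
    DFun (i1 :: i') k (t + 1) = deltaFun (i1 - k) (DFun i' k t) := by
  show (if k < i1 then deltaFun (i1 - k) ∘ sigmaFun 0 ∘ derivedFun (DFun i' k)
    else if k = i1 then derivedFun (DFun i' k)
    else sigmaFun 0 ∘ derivedFun (DFun i' (k - 1))) (t+1) = _
  rw [if_pos h]
  show deltaFun (i1 - k) (sigmaFun 0 (derivedFun (DFun i' k) (t+1))) = _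
  unfold derivedFun sigmaFun
  simp

lemma DFun_cons_eq (i1 : ℕ) (i' : List ℕ) (t : ℕ) :
    DFun (i1 :: i') i1 (t + 1) = DFun i' i1 t + 1 := by
  show (if i1 < i1 then deltaFun (i1 - i1) ∘ sigmaFun 0 ∘ derivedFun (DFun i' i1)
    else if i1 = i1 then derivedFun (DFun i' i1)
    else sigmaFun 0 ∘ derivedFun (DFun i' (i1 - 1))) (t+1) = _
  rw [if_neg (lt_irrefl i1), if_pos rfl]
  show derivedFun (DFun i' i1) (t+1) = _
  unfold derivedFun
  simp

lemma DFun_cons_gt {i1 k : ℕ} (i' : List ℕ) (h : i1 < k) (t : ℕ) :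
    DFun (i1 :: i') k (t + 1) = DFun i' (k - 1) t := by
  show (if k < i1 then deltaFun (i1 - k) ∘ sigmaFun 0 ∘ derivedFun (DFun i' k)
    else if k = i1 then derivedFun (DFun i' k)
    else sigmaFun 0 ∘ derivedFun (DFun i' (k - 1))) (t+1) = _
  rw [if_neg (by omega), if_neg (by omega)]
  show sigmaFun 0 (derivedFun (DFun i' (k-1)) (t+1)) = _
  unfold derivedFun sigmaFun
  simp

lemma DFun_add_le : ∀ (i : List ℕ) (k t : ℕ),
    (∀ s, s < i.length → i.getD s 0 + s + 1 ≤ i.length) → k ≤ i.length →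
    DFun i k t + k ≤ max t i.length := by
  intro i
  induction i with
  | nil =>
    intro k t _ hk
    simp only [List.length_nil, Nat.le_zero] at hk
    subst hk
    show t + 0 ≤ _
    omega
  | cons i1 i' ih =>
    intro k t hv hk
    have hL : (i1 :: i').length = i'.length + 1 := rfl
    have hv0 : i1 + 1 ≤ i'.length + 1 := by
      have := hv 0 (by simp)
      simpa using this
    have hv' : ∀ s, s < i'.length → i'.getD s 0 + s + 1 ≤ i'.length := by
      intro s hs
      have := hv (s + 1) (by simp; omega)
      simp only [List.getD_cons_succ] at this
      simp only [List.length_cons] at this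
      omega
    rcases t with _ | t
    · rw [DFun_cons_zero]
      simp only [List.length_cons] at hk ⊢
      omega
    · rcases lt_trichotomy k i1 with h | h | h
      · rw [DFun_cons_lt i' h]
        have hk' : k ≤ i'.length := by omega
        have := ih k t hv' hk'
        unfold deltaFun
        split <;> simp only [List.length_cons] <;> omega
      · subst h
        rw [DFun_cons_eq]
        have hk' : k ≤ i'.length := by omega
        have := ih k t hv' hk'
        simp only [List.length_cons]
        omega
      · rw [DFun_cons_gt i' h]
        have hk' : k - 1 ≤ i'.length := by simp only [List.length_cons] at hk; omega
        have := ih (k-1) t hv' hk'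
        simp only [List.length_cons]
        omega

lemma DFun_le (i : List ℕ) (n k t : ℕ) (hlen : i.length = n)
    (hv : ∀ s, s < n → i.getD s 0 + s + 1 ≤ n) (hk : k ≤ n) (ht : t ≤ n) :
    DFun i k t ≤ n - k := by
  have := DFun_add_le i k t (by rw [hlen]; exact hv) (by omega)
  rw [hlen] at this
  omega

lemma tw_dk_inv {X : SSet} {G : CategoryTheory.SimplicialObject GrpCat} (τ : TwistingFn X G)
    (n k : ℕ) (x : X _⦋n + 1 + 1⦌) (h0 : 0 < k) (h2 : k < n + 1 + 1) :
    grpOp G (deltaFun k) (n+1) n (τ.map (n+1) x)⁻¹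
      = (τ.map n (simpOp X (deltaFun (k+1)) (n+1+1) (n+1) x))⁻¹ := by
  rw [grpOp_inv, τ.dk n k x h0 (by omega)]

lemma tw_d0_inv {X : SSet} {G : CategoryTheory.SimplicialObject GrpCat} (τ : TwistingFn X G)
    (n : ℕ) (x : X _⦋n + 1 + 1⦌) :
    grpOp G (deltaFun 0) (n+1) n (τ.map (n+1) x)⁻¹
      = (τ.map n (simpOp X (deltaFun 1) (n+1+1) (n+1) x))⁻¹
        * τ.map n (simpOp X (deltaFun 0) (n+1+1) (n+1) x) := by
  rw [grpOp_inv, τ.d0, mul_inv_rev, inv_inv]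

lemma prod_telescope {M : Type*} [Group M] (j : ℕ) : ∀ (q : ℕ) (f g : ℕ → M) (E : M), j ≤ q →
    (∀ r, r < j → f r = g r) → (f j = g j * E⁻¹) → (f (j+1) = E) →
    (∀ r, j + 2 ≤ r → r ≤ q + 1 → f r = g (r - 1)) →
    ((List.range (q+2)).map f).prod = ((List.range (q+1)).map g).prod := by
  intro q
  induction q with
  | zero =>
    intro f g E hj h1 h2 h3 _
    have hj0 : j = 0 := by omega
    subst hj0
    simp only [List.range_succ, List.range_zero, List.map_append, List.prod_append,
      List.map_cons, List.map_nil, List.prod_cons, List.prod_nil, mul_one, List.nil_append]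
    rw [h2, h3]
    simp [mul_assoc]
  | succ q ihq =>
    intro f g E hj h1 h2 h3 h4
    rcases Nat.lt_or_ge j (q+1) with hlt | hge
    · have IH := ihq f g E (by omega) h1 h2 h3 (fun r h5 h6 => h4 r h5 (by omega))
      simp only [List.range_succ, List.map_append, List.prod_append,
        List.map_cons, List.map_nil, List.prod_cons, List.prod_nil, mul_one] at IH ⊢
      rw [IH]
      have hf := h4 (q+2) (by omega) (by omega)
      rw [show q+2-1 = q+1 from by omega] at hf
      rw [hf]
    · have hj' : j = q + 1 := by omega
      subst hj'
      simp only [List.range_succ, List.map_append, List.prod_append,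
        List.map_cons, List.map_nil, List.prod_cons, List.prod_nil, mul_one]
      rw [h2, show q+1+1 = (q+1)+1 from rfl, h3, List.map_congr_left (fun r hr => h1 r (by
        have := List.mem_range.mp hr; omega)), h1 q (by omega)]
      simp [mul_assoc]

lemma step1 {X : SSet} {G : CategoryTheory.SimplicialObject GrpCat} (τ : TwistingFn X G)
    (m r i1 : ℕ) (i' : List ℕ) (hlen : i'.length = m)
    (hv : ∀ s, s < m + 1 → (i1 :: i').getD s 0 + s + 1 ≤ m + 1)
    (hr : r ≤ m + 1) (g : G _⦋m + 1 - r⦌) :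
    grpOp G (deltaFun 0) (m+1) m (grpOp G (DFun (i1 :: i') r) (m+1-r) (m+1) g)
      = grpOp G (fun t => DFun (i1 :: i') r (t+1)) (m+1-r) m g := by
  rw [grpOp_comp G (m+1-r) (m+1) m (DFun (i1 :: i') r) (deltaFun 0)
      (fun u v h _ => DFun_mono _ _ h)
      (fun t ht => DFun_le (i1 :: i') (m+1) r t (by simp [hlen]) hv hr ht)
      (fun u v h _ => deltaFun_mono 0 h)
      (fun t ht => by unfold deltaFun; split <;> omega)]
  exact grpOp_congr G (m+1-r) m _ _
    (fun t _ => by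
      have h0 : deltaFun 0 t = t + 1 := by unfold deltaFun; simp
      rw [h0]) g

lemma caseA {X : SSet} {G : CategoryTheory.SimplicialObject GrpCat} (τ : TwistingFn X G)
    (m r i1 : ℕ) (i' : List ℕ) (hlen : i'.length = m)
    (hv' : ∀ s, s < m → i'.getD s 0 + s + 1 ≤ m)
    (hr : r < i1) (hi1 : i1 ≤ m) (x : X _⦋m + 1 + 1⦌) :
    grpOp G (fun t => DFun (i1 :: i') r (t+1)) (m+1-r) m
      ((τ.map (m+1-r) (simpOp X (fun t => t + r) (m+1+1) (m+1-r+1) x))⁻¹)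
    = grpOp G (DFun i' r) (m-r) m
      ((τ.map (m-r) (simpOp X (fun t => t + r) (m+1) (m-r+1)
        (simpOp X (deltaFun (i1+1)) (m+1+1) (m+1) x)))⁻¹) := by
  obtain ⟨c, rfl⟩ : ∃ c, m = r + c := ⟨m - r, by omega⟩
  rw [show r + c + 1 - r = c + 1 from by omega, show r + c - r = c from by omega]
  rw [simpOp_comp X (r+c+1+1) (r+c+1) (c+1) (deltaFun (i1+1)) (fun t => t + r)
      (fun u v h _ => deltaFun_mono _ h)
      (fun t ht => by unfold deltaFun; split <;> omega)
      (fun u v h _ => by show u + r ≤ v + r; omega)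
      (fun t ht => by show t + r ≤ _; omega)]
  rw [grpOp_congr G (c+1) (r+c) (fun t => DFun (i1 :: i') r (t+1))
      (fun t => deltaFun (i1-r) (DFun i' r t)) (fun t _ => by beta_reduce; exact DFun_cons_lt i' hr t)]
  rw [← grpOp_comp G (c+1) c (r+c) (deltaFun (i1-r)) (DFun i' r)
      (fun u v h _ => deltaFun_mono _ h)
      (fun t ht => by unfold deltaFun; split <;> omega)
      (fun u v h _ => DFun_mono i' r h)
      (fun t ht => by have := DFun_le i' (r+c) r t hlen hv' (by omega) ht; omega)]
  rw [tw_dk_inv τ c (i1-r) (simpOp X (fun t => t + r) (r+c+1+1) (c+1+1) x) (by omega) (by omega)]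
  rw [simpOp_comp X (r+c+1+1) (c+1+1) (c+1) (fun t => t + r) (deltaFun (i1-r+1))
      (fun u v h _ => by show u + r ≤ v + r; omega)
      (fun t ht => by show t + r ≤ _; omega)
      (fun u v h _ => deltaFun_mono _ h)
      (fun t ht => by unfold deltaFun; split <;> omega)]
  rw [simpOp_congr X (r+c+1+1) (c+1) (fun t => deltaFun (i1-r+1) t + r)
      (fun t => deltaFun (i1+1) (t+r))
      (fun t _ => by beta_reduce; unfold deltaFun; split <;> split <;> omega)]

lemma caseE {X : SSet} {G : CategoryTheory.SimplicialObject GrpCat} (τ : TwistingFn X G)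
    (m i1 : ℕ) (i' : List ℕ) (x : X _⦋m + 1 + 1⦌) :
    grpOp G (fun t => DFun (i1 :: i') (i1+1) (t+1)) (m+1-(i1+1)) m
      ((τ.map (m+1-(i1+1)) (simpOp X (fun t => t + (i1+1)) (m+1+1) (m+1-(i1+1)+1) x))⁻¹)
    = grpOp G (DFun i' i1) (m+1-(i1+1)) m
      ((τ.map (m+1-(i1+1)) (simpOp X (fun t => t + (i1+1)) (m+1+1) (m+1-(i1+1)+1) x))⁻¹) :=
  grpOp_congr G _ m _ _ (fun t _ => by
    beta_reduce
    rw [DFun_cons_gt i' (Nat.lt_succ_self i1) t, Nat.succ_sub_one]) _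

lemma caseEq {X : SSet} {G : CategoryTheory.SimplicialObject GrpCat} (τ : TwistingFn X G)
    (m i1 : ℕ) (i' : List ℕ) (hlen : i'.length = m)
    (hv' : ∀ s, s < m → i'.getD s 0 + s + 1 ≤ m)
    (hi1 : i1 ≤ m) (x : X _⦋m + 1 + 1⦌) :
    grpOp G (fun t => DFun (i1 :: i') i1 (t+1)) (m+1-i1) m
      ((τ.map (m+1-i1) (simpOp X (fun t => t + i1) (m+1+1) (m+1-i1+1) x))⁻¹)
    = grpOp G (DFun i' i1) (m-i1) m
        ((τ.map (m-i1) (simpOp X (fun t => t + i1) (m+1) (m-i1+1)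
          (simpOp X (deltaFun (i1+1)) (m+1+1) (m+1) x)))⁻¹)
      * (grpOp G (DFun i' i1) (m+1-(i1+1)) m
        ((τ.map (m+1-(i1+1)) (simpOp X (fun t => t + (i1+1)) (m+1+1) (m+1-(i1+1)+1) x))⁻¹))⁻¹ := by
  obtain ⟨c, rfl⟩ : ∃ c, m = i1 + c := ⟨m - i1, by omega⟩
  rw [show i1 + c + 1 - i1 = c + 1 from by omega, show i1 + c - i1 = c from by omega,
      show i1 + c + 1 - (i1 + 1) = c from by omega]
  rw [simpOp_comp X (i1+c+1+1) (i1+c+1) (c+1) (deltaFun (i1+1)) (fun t => t + i1)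
      (fun u v h _ => deltaFun_mono _ h)
      (fun t ht => by unfold deltaFun; split <;> omega)
      (fun u v h _ => by show u + i1 ≤ v + i1; omega)
      (fun t ht => by show t + i1 ≤ _; omega)]
  rw [grpOp_congr G (c+1) (i1+c) (fun t => DFun (i1 :: i') i1 (t+1))
      (fun t => deltaFun 0 (DFun i' i1 t))
      (fun t _ => by beta_reduce; rw [DFun_cons_eq]; unfold deltaFun; simp)]
  rw [← grpOp_comp G (c+1) c (i1+c) (deltaFun 0) (DFun i' i1)
      (fun u v h _ => deltaFun_mono _ h)
      (fun t ht => by unfold deltaFun; split <;> omega)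
      (fun u v h _ => DFun_mono i' i1 h)
      (fun t ht => by have := DFun_le i' (i1+c) i1 t hlen hv' (by omega) ht; omega)]
  rw [tw_d0_inv τ c (simpOp X (fun t => t + i1) (i1+c+1+1) (c+1+1) x)]
  rw [grpOp_mul]
  rw [simpOp_comp X (i1+c+1+1) (c+1+1) (c+1) (fun t => t + i1) (deltaFun 1)
      (fun u v h _ => by show u + i1 ≤ v + i1; omega)
      (fun t ht => by show t + i1 ≤ _; omega)
      (fun u v h _ => deltaFun_mono _ h)
      (fun t ht => by unfold deltaFun; split <;> omega)]
  rw [simpOp_comp X (i1+c+1+1) (c+1+1) (c+1) (fun t => t + i1) (deltaFun 0)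
      (fun u v h _ => by show u + i1 ≤ v + i1; omega)
      (fun t ht => by show t + i1 ≤ _; omega)
      (fun u v h _ => deltaFun_mono _ h)
      (fun t ht => by unfold deltaFun; split <;> omega)]
  rw [simpOp_congr X (i1+c+1+1) (c+1) (fun t => deltaFun 1 t + i1)
      (fun t => deltaFun (i1+1) (t + i1))
      (fun t _ => by beta_reduce; unfold deltaFun; split <;> split <;> omega)]
  rw [simpOp_congr X (i1+c+1+1) (c+1) (fun t => deltaFun 0 t + i1)
      (fun t => t + (i1+1))
      (fun t _ => by beta_reduce; unfold deltaFun; split <;> omega)]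
  rw [grpOp_inv]
  congr 1
  rw [grpOp_inv, inv_inv]

lemma caseGt {X : SSet} {G : CategoryTheory.SimplicialObject GrpCat} (τ : TwistingFn X G)
    (m r i1 : ℕ) (i' : List ℕ) (hlen : i'.length = m)
    (hv' : ∀ s, s < m → i'.getD s 0 + s + 1 ≤ m)
    (hr2 : i1 + 2 ≤ r) (hrm : r ≤ m + 1) (x : X _⦋m + 1 + 1⦌) :
    grpOp G (fun t => DFun (i1 :: i') r (t+1)) (m+1-r) m
      ((τ.map (m+1-r) (simpOp X (fun t => t + r) (m+1+1) (m+1-r+1) x))⁻¹)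
    = grpOp G (DFun i' (r-1)) (m-(r-1)) m
      ((τ.map (m-(r-1)) (simpOp X (fun t => t + (r-1)) (m+1) (m-(r-1)+1)
        (simpOp X (deltaFun (i1+1)) (m+1+1) (m+1) x)))⁻¹) := by
  obtain ⟨s, rfl⟩ : ∃ s, r = s + 1 := ⟨r - 1, by omega⟩
  obtain ⟨c, rfl⟩ : ∃ c, m = s + c := ⟨m - s, by omega⟩
  rw [show s + 1 - 1 = s from by omega, show s + c + 1 - (s + 1) = c from by omega,
      show s + c - s = c from by omega]
  rw [simpOp_comp X (s+c+1+1) (s+c+1) (c+1) (deltaFun (i1+1)) (fun t => t + s)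
      (fun u v h _ => deltaFun_mono _ h)
      (fun t ht => by unfold deltaFun; split <;> omega)
      (fun u v h _ => by show u + s ≤ v + s; omega)
      (fun t ht => by show t + s ≤ _; omega)]
  rw [grpOp_congr G c (s+c) (fun t => DFun (i1 :: i') (s+1) (t+1)) (DFun i' s)
      (fun t _ => by
        beta_reduce
        have h5 := DFun_cons_gt i' (show i1 < s + 1 by omega) t
        rw [show s + 1 - 1 = s from by omega] at h5
        exact h5)]
  rw [simpOp_congr X (s+c+1+1) (c+1) (fun t => deltaFun (i1+1) (t + s))
      (fun t => t + (s+1))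
      (fun t _ => by beta_reduce; unfold deltaFun; split <;> omega)]

lemma Sz_d0 {X : SSet} {G : CategoryTheory.SimplicialObject GrpCat} (τ : TwistingFn X G)
    (m i1 : ℕ) (i' : List ℕ) (hlen : i'.length = m)
    (hv : ∀ s, s < m + 1 → (i1 :: i').getD s 0 + s + 1 ≤ m + 1) (x : X _⦋m + 1 + 1⦌) :
    grpOp G (deltaFun 0) (m+1) m (Sz τ (m+1) (i1 :: i') x)
      = Sz τ m i' (simpOp X (deltaFun (i1+1)) (m+1+1) (m+1) x) := by
  have hi1 : i1 ≤ m := by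
    have := hv 0 (by omega); simp only [List.getD_cons_zero] at this; omega
  have hv' : ∀ s, s < m → i'.getD s 0 + s + 1 ≤ m := by
    intro s hs; have := hv (s+1) (by omega); simp only [List.getD_cons_succ] at this; omega
  unfold Sz
  rw [grpOp_prod, List.map_map]
  refine prod_telescope i1 m _ _ (grpOp G (DFun i' i1) (m+1-(i1+1)) m
      ((τ.map (m+1-(i1+1)) (simpOp X (fun t => t + (i1+1)) (m+1+1) (m+1-(i1+1)+1) x))⁻¹))
      hi1 ?_ ?_ ?_ ?_
  · intro r hr
    simp only [Function.comp_apply]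
    beta_reduce
    rw [step1 τ m r i1 i' hlen hv (by omega)]
    exact caseA τ m r i1 i' hlen hv' hr hi1 x
  · simp only [Function.comp_apply]
    beta_reduce
    rw [step1 τ m i1 i1 i' hlen hv (by omega)]
    exact caseEq τ m i1 i' hlen hv' hi1 x
  · simp only [Function.comp_apply]
    beta_reduce
    rw [step1 τ m (i1+1) i1 i' hlen hv (by omega)]
    exact caseE τ m i1 i' x
  · intro r h5 h6
    simp only [Function.comp_apply]
    beta_reduce
    rw [step1 τ m r i1 i' hlen hv h6]
    exact caseGt τ m r i1 i' hlen hv' h5 h6 x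

lemma eraseIdx_map {α β : Type*} (f : α → β) :
    ∀ (L : List α) (j : ℕ), (L.map f).eraseIdx j = (L.eraseIdx j).map f := by
  intro L
  induction L with
  | nil => intro j; simp
  | cons a L ih =>
    intro j
    cases j with
    | zero => simp
    | succ j => simp [ih j]

lemma foldl_eraseIdx_map (g : ℕ → ℕ) :
    ∀ (is : List ℕ) (L : List ℕ),
      is.foldl (fun L a => L.eraseIdx (a+1)) (L.map g)
        = (is.foldl (fun L a => L.eraseIdx (a+1)) L).map g := by
  intro is
  induction is with
  | nil => intro L; simp
  | cons a is ih =>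
    intro L
    simp only [List.foldl_cons]
    rw [eraseIdx_map g L (a+1)]
    exact ih _

lemma range_eraseIdx (a j : ℕ) (hj : j ≤ a) :
    (List.range (a+1)).eraseIdx j = (List.range a).map (deltaFun j) := by
  apply List.ext_getElem
  · simp [List.length_eraseIdx]
    omega
  · intro u h1 h2
    have hu : u < a := by simpa using h2
    have hlen : u < (List.range (a+1)).length := by simp; omega
    rw [List.getElem_eraseIdx, List.getElem_map]
    simp only [List.getElem_range]
    unfold deltaFun
    split <;> rfl

lemma restList_cons (n i1 : ℕ) (L : List ℕ) (h : i1 + 1 ≤ n + 1) :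
    restList (n+1) (i1 :: L) = (restList n L).map (deltaFun (i1+1)) := by
  unfold restList restAfter
  rw [List.take_length (l := i1 :: L), List.take_length (l := L)]
  simp only [List.foldl_cons]
  rw [range_eraseIdx (n+1) (i1+1) (by omega)]
  exact foldl_eraseIdx_map (deltaFun (i1+1)) L (List.range (n+1))

lemma map_getD_range (L : List ℕ) :
    (List.range L.length).map (fun t => L.getD t 0) = L := by
  apply List.ext_getElem
  · simp
  · intro n h1 h2
    have hn : n < L.length := h2
    rw [List.getElem_map]
    simp only [List.getElem_range]
    exact List.getD_eq_getElem L 0 hn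

lemma mono_of_succ (p : ℕ → ℕ) (N : ℕ) (h : ∀ s, s < N → p s < p (s+1)) :
    ∀ u v, u ≤ v → v ≤ N → p u ≤ p v := by
  intro u v
  induction v with
  | zero =>
    intro huv _
    have hu : u = 0 := by omega
    rw [hu]
  | succ v ihv =>
    intro huv hvN
    rcases Nat.lt_or_ge u (v+1) with h1 | h2
    · exact le_trans (ihv (by omega) (by omega)) (le_of_lt (h v (by omega)))
    · have hu : u = v + 1 := by omega
      rw [hu]

set_option maxHeartbeats 2000000 in
/-- (Lemma 4.3, first identity.)  Let `n = k + l` with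
`1 ≤ k ≤ n` (here the paper's `k` is `k + 1`), write `i ∈ S_{n-1}` as
`i = (i_1, i_2)` with `i_1` the first `l` entries, and assume the removal
procedure of `i_1` on `{0, …, n}` leaves exactly `{p_0, …, p_k}`.  Then for
every `x ∈ X_n`:  `(∂_0)^l Sz_i x = Sz_{i_2} x(p_0, p_1, …, p_k)`. -/
theorem szczarba_Sz_d0_pow (X : SSet) (G : CategoryTheory.SimplicialObject GrpCat)
    (τ : TwistingFn X G) (k l : ℕ) (i : List ℕ) (hi : memS (k + l) (k + l) i)
    (p : ℕ → ℕ) (hp0 : p 0 = 0) (hpk : p (k + 1) = k + l + 1)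
    (hmono : ∀ s < k + 1, p s < p (s + 1))
    (hrest : restList (k + l + 1) (i.take l) = (List.range (k + 2)).map p)
    (x : X _⦋k + l + 1⦌) :
    grpOp G (fun t => t + l) (k + l) k (Sz τ (k + l) i x)
      = Sz τ k (i.drop l) (simpOp X p (k + l + 1) (k + 1) x) := by
  induction l generalizing i p with
  | zero =>
    obtain ⟨hilen, hiv⟩ := hi
    have h1 : restList (k+0+1) (i.take 0) = List.range (k+2) := by
      rw [List.take_zero]; rfl
    rw [h1] at hrest
    have hp : ∀ t, t ≤ k + 1 → p t = t := by
      intro t ht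
      have h2 := congrArg (fun L => L.getD t 0) hrest
      beta_reduce at h2
      rw [List.getD_eq_getElem (List.range (k+2)) 0 (by simp; omega),
        List.getD_eq_getElem ((List.range (k+2)).map p) 0 (by simp; omega),
        List.getElem_map] at h2
      simp only [List.getElem_range] at h2
      exact h2.symm
    show grpOp G (fun t => t + 0) k k (Sz τ k i x)
      = Sz τ k (i.drop 0) (simpOp X p (k+1) (k+1) x)
    rw [grpOp_id G k (fun t => t + 0) (fun t _ => rfl), List.drop_zero,
        simpOp_id X (k+1) p (fun t ht => hp t ht)]
  | succ l ih =>
    obtain ⟨hilen, hiv⟩ := hi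
    cases i with
    | nil =>
      rw [List.length_nil] at hilen
      exact absurd hilen (by omega)
    | cons i1 i' =>
      have hlen' : i'.length = k + l := by
        simp only [List.length_cons] at hilen; omega
      have hv2 : ∀ s, s < k + l + 1 → (i1 :: i').getD s 0 + s + 1 ≤ k + l + 1 :=
        fun s hs => hiv s hs
      have hi1 : i1 ≤ k + l := by
        have := hv2 0 (by omega); simp only [List.getD_cons_zero] at this; omega
      have hv' : ∀ s, s < k + l → i'.getD s 0 + s + 1 ≤ k + l := by
        intro s hs
        have := hv2 (s+1) (by omega)
        simp only [List.getD_cons_succ] at this; omega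
      have hrest2 : (restList (k+l+1) (i'.take l)).map (deltaFun (i1+1))
          = (List.range (k+2)).map p := by
        rw [← restList_cons (k+l+1) i1 (i'.take l) (by omega)]
        exact hrest
      obtain ⟨R, hR⟩ : ∃ R, restList (k+l+1) (i'.take l) = R := ⟨_, rfl⟩
      rw [hR] at hrest2
      have hRlen : R.length = k + 2 := by
        have := congrArg List.length hrest2; simpa using this
      have hgp : ∀ s, s < k + 2 → deltaFun (i1+1) (R.getD s 0) = p s := by
        intro s hs
        have h2 := congrArg (fun L => L.getD s 0) hrest2
        beta_reduce at h2
        rw [List.getD_eq_getElem (R.map (deltaFun (i1+1))) 0 (by simp [hRlen]; omega),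
          List.getD_eq_getElem ((List.range (k+2)).map p) 0 (by simp; omega),
          List.getElem_map, List.getElem_map] at h2
        simp only [List.getElem_range] at h2
        rw [List.getD_eq_getElem R 0 (by omega)]
        exact h2
      have hrest' : restList (k+l+1) (i'.take l)
          = (List.range (k+2)).map (fun t => R.getD t 0) := by
        rw [hR, ← hRlen]; exact (map_getD_range R).symm
      have hp0' : R.getD 0 0 = 0 := by
        have h3 := hgp 0 (by omega); rw [hp0] at h3
        unfold deltaFun at h3; split at h3 <;> omega
      have hpk' : R.getD (k+1) 0 = k + l + 1 := by
        have h3 := hgp (k+1) (by omega); rw [hpk] at h3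
        unfold deltaFun at h3; split at h3 <;> omega
      have hmono' : ∀ s, s < k + 1 → R.getD s 0 < R.getD (s+1) 0 := by
        intro s hs
        have h1 := hgp s (by omega)
        have h2 := hgp (s+1) (by omega)
        have h3 := hmono s hs
        rw [← h1, ← h2] at h3
        unfold deltaFun at h3; split at h3 <;> split at h3 <;> omega
      have hmonoLe : ∀ u v, u ≤ v → v ≤ k+1 → R.getD u 0 ≤ R.getD v 0 :=
        mono_of_succ (fun t => R.getD t 0) (k+1) hmono'
      rw [show (i1 :: i').drop (l+1) = i'.drop l from rfl]
      calc grpOp G (fun t => t + (l+1)) (k+(l+1)) k (Sz τ (k+(l+1)) (i1 :: i') x)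
          = grpOp G (fun t => deltaFun 0 (t + l)) (k+l+1) k (Sz τ (k+l+1) (i1 :: i') x) :=
            grpOp_congr G (k+l+1) k _ _
              (fun t _ => by beta_reduce; unfold deltaFun; split <;> omega) _
        _ = grpOp G (fun t => t + l) (k+l) k
              (grpOp G (deltaFun 0) (k+l+1) (k+l) (Sz τ (k+l+1) (i1 :: i') x)) :=
            (grpOp_comp G (k+l+1) (k+l) k (deltaFun 0) (fun t => t + l)
              (fun u v h _ => deltaFun_mono 0 h)
              (fun t ht => by unfold deltaFun; split <;> omega)
              (fun u v h _ => by show u + l ≤ v + l; omega)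
              (fun t ht => by show t + l ≤ _; omega) (Sz τ (k+l+1) (i1 :: i') x)).symm
        _ = grpOp G (fun t => t + l) (k+l) k
              (Sz τ (k+l) i' (simpOp X (deltaFun (i1+1)) (k+l+1+1) (k+l+1) x)) := by
            rw [Sz_d0 τ (k+l) i1 i' hlen' hv2 x]
        _ = Sz τ k (i'.drop l) (simpOp X (fun t => R.getD t 0) (k+l+1) (k+1)
              (simpOp X (deltaFun (i1+1)) (k+l+1+1) (k+l+1) x)) :=
            ih i' ⟨hlen', hv'⟩ (fun t => R.getD t 0) hp0' hpk' hmono' hrest' _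
        _ = Sz τ k (i'.drop l) (simpOp X p (k+(l+1)+1) (k+1) x) := by
            congr 1
            rw [simpOp_comp X (k+l+1+1) (k+l+1) (k+1) (deltaFun (i1+1)) (fun t => R.getD t 0)
              (fun u v h _ => deltaFun_mono _ h)
              (fun t ht => by unfold deltaFun; split <;> omega)
              (fun u v h hv3 => hmonoLe u v h hv3)
              (fun t ht => by
                show R.getD t 0 ≤ k + l + 1
                have h4 := hmonoLe t (k+1) ht le_rfl
                have h5 := hpk'
                omega)]
            exact simpOp_congr X (k+l+1+1) (k+1) _ p (fun t ht => hgp t (by omega)) x
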